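/- Let L be a finite poset with a unique minimal element and a unique maximal element. Suppose that for all distinct elements x₀, x₁, x₂ of L such that x₁ and x₂ both cover x₀, the pair x₁, x₂ has a least upper bound in L. Then L is a lattice. -/

import Mathlib

section Aux

variable {L : Type*} [PartialOrder L] [Fintype L]

private lemma isLUB_pair_left {a b : L} (hab : a ≤ b) : IsLUB {a, b} b := by
  constructor
  · rintro c (rfl | rfl)
    · exact hab
    · exact le_rfl
  · intro c hc
    exact hc (by simp)

private lemma isLUB_pair_right {a b : L} (hba : b ≤ a) : IsLUB {a, b} a := by
  constructor
  · rintro c (rfl | rfl)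
    · exact le_rfl
    · exact hba
  · intro c hc
    exact hc (by simp)

/-- The key induction: all pairs above `x₀` have a join. -/
private lemma key (h : ∀ x₀ x₁ x₂ : L, x₀ ≠ x₁ → x₀ ≠ x₂ → x₁ ≠ x₂ →
      x₀ ⋖ x₁ → x₀ ⋖ x₂ → ∃ u : L, IsLUB {x₁, x₂} u) :
    ∀ x₀ a b : L, x₀ ≤ a → x₀ ≤ b → ∃ u : L, IsLUB {a, b} u := by
  have hsa : IsStronglyAtomic L := IsStronglyAtomic.of_wellFounded_lt wellFounded_lt
  intro x₀
  induction x₀ using WellFoundedGT.induction with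
  | _ x₀ IH =>
    intro a b hxa hxb
    rcases eq_or_lt_of_le hxa with rfl | hxa'
    · exact ⟨b, isLUB_pair_left hxb⟩
    rcases eq_or_lt_of_le hxb with rfl | hxb'
    · exact ⟨a, isLUB_pair_right hxa⟩
    obtain ⟨y₁, hy₁, hy₁a⟩ := exists_covBy_le_of_lt hxa'
    obtain ⟨y₂, hy₂, hy₂b⟩ := exists_covBy_le_of_lt hxb'
    rcases eq_or_ne y₁ y₂ with rfl | hne
    · exact IH y₁ hy₁.lt a b hy₁a hy₂b
    · obtain ⟨z, hz⟩ := h x₀ y₁ y₂ hy₁.lt.ne hy₂.lt.ne hne hy₁ hy₂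
      have hzy₁ : y₁ ≤ z := hz.1 (by simp)
      have hzy₂ : y₂ ≤ z := hz.1 (by simp)
      obtain ⟨w, hw⟩ := IH y₁ hy₁.lt z a hzy₁ hy₁a
      have hwz : z ≤ w := hw.1 (by simp)
      have hwa : a ≤ w := hw.1 (by simp)
      obtain ⟨v, hv⟩ := IH y₂ hy₂.lt w b (hzy₂.trans hwz) hy₂b
      have hvw : w ≤ v := hv.1 (by simp)
      have hvb : b ≤ v := hv.1 (by simp)
      refine ⟨v, ⟨?_, ?_⟩⟩
      · rintro c (rfl | rfl)
        · exact hwa.trans hvw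
        · exact hvb
      · intro u hu
        have hua : a ≤ u := hu (by simp)
        have hub : b ≤ u := hu (by simp)
        have huz : z ≤ u := hz.2 (by
          rintro c (rfl | rfl)
          · exact hy₁a.trans hua
          · exact hy₂b.trans hub)
        have huw : w ≤ u := hw.2 (by rintro c (rfl | rfl) <;> assumption)
        exact hv.2 (by rintro c (rfl | rfl) <;> assumption)

end Aux

/-- **Björner–Edelman–Ziegler lemma.** Let `L` be a finite poset with a unique minimal
element and a unique maximal element. Suppose that for all distinct `x₀, x₁, x₂` such
that `x₁` and `x₂` both cover `x₀`, the pair `x₁, x₂` has a least upper bound.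
Then `L` is a lattice: every pair of elements has a least upper bound and a greatest
lower bound. -/
theorem stmt0 {L : Type*} [PartialOrder L] [Fintype L]
    (hmin : ∃! a : L, IsMin a) (hmax : ∃! a : L, IsMax a)
    (h : ∀ x₀ x₁ x₂ : L, x₀ ≠ x₁ → x₀ ≠ x₂ → x₁ ≠ x₂ →
      x₀ ⋖ x₁ → x₀ ⋖ x₂ → ∃ u : L, IsLUB {x₁, x₂} u) :
    ∀ x y : L, (∃ u : L, IsLUB {x, y} u) ∧ (∃ u : L, IsGLB {x, y} u) := by
  classical
  -- bottom element
  obtain ⟨m, hm, hmu⟩ := hmin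
  have hbot : ∀ x : L, m ≤ x := by
    intro x
    obtain ⟨b, hbx, hbmin⟩ := exists_minimal_le_of_wellFoundedLT (fun _ => True) x trivial
    have : IsMin b := fun c hc => hbmin.2 trivial hc
    rw [← hmu b this]
    exact hbx
  -- binary joins exist for all pairs
  have hjoin : ∀ a b : L, ∃ u : L, IsLUB {a, b} u := fun a b =>
    key h m a b (hbot a) (hbot b)
  -- joins of nonempty finsets exist
  have hfin : ∀ s : Finset L, s.Nonempty → ∃ u : L, IsLUB (s : Set L) u := by
    intro s
    induction s using Finset.induction_on with
    | empty => rintro ⟨x, hx⟩; simp at hx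
    | @insert a s ha IH =>
      intro _
      rcases s.eq_empty_or_nonempty with rfl | hs
      · exact ⟨a, by simpa using isLUB_singleton⟩
      · obtain ⟨u, hu⟩ := IH hs
        obtain ⟨v, hv⟩ := hjoin a u
        refine ⟨v, ⟨?_, ?_⟩⟩
        · intro c hc
          simp only [Finset.coe_insert, Set.mem_insert_iff] at hc
          rcases hc with rfl | hc
          · exact hv.1 (by simp)
          · exact (hu.1 hc).trans (hv.1 (by simp))
        · intro c hc
          refine hv.2 ?_
          rintro d (rfl | rfl)
          · exact hc (by simp)
          · exact hu.2 fun e he => hc (by simp [he])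
  intro x y
  refine ⟨hjoin x y, ?_⟩
  -- glb as lub of common lower bounds
  set S : Finset L := Finset.univ.filter (fun z => z ≤ x ∧ z ≤ y) with hS
  have hSne : S.Nonempty := ⟨m, by simp [hS, hbot]⟩
  obtain ⟨u, hu⟩ := hfin S hSne
  have hux : u ≤ x := hu.2 (by intro z hz; simp [hS] at hz; exact hz.1)
  have huy : u ≤ y := hu.2 (by intro z hz; simp [hS] at hz; exact hz.2)
  refine ⟨u, ⟨?_, ?_⟩⟩
  · rintro c (rfl | rfl) <;> assumption
  · intro c hc
    exact hu.1 (by simp [hS, hc (show x ∈ ({x, y} : Set L) by simp),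
      hc (show y ∈ ({x, y} : Set L) by simp)])
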